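/- Let C* vanish identically, i.e. C*(X,Y,Z,W) = 0 for all X,Y,Z,W ∈ V, with a ≠ 0 and a + (n−2)b ≠ 0. Then the Ricci tensor is proportional to the metric: S(Y,Z) = α g(Y,Z) for all Y,Z ∈ V, where α = (r / (1 + (b/a)(n−2))) · (−b/a + (1/n)(1 + 2b(n−1)/a)). -/

import Mathlib

open scoped RealInnerProductSpace

section Aux

variable {V : Type*} [NormedAddCommGroup V] [InnerProductSpace ℝ V]

lemma lin_zero (f : V → ℝ) (hf : ∀ (c : ℝ) x y, f (c • x + y) = c * f x + f y) :
    f 0 = 0 := by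
  have h := hf 1 0 0
  simp at h
  linarith

lemma lin_smul (f : V → ℝ) (hf : ∀ (c : ℝ) x y, f (c • x + y) = c * f x + f y)
    (c : ℝ) (x : V) : f (c • x) = c * f x := by
  have h := hf c x 0
  simpa [lin_zero f hf] using h

lemma lin_sum (f : V → ℝ) (hf : ∀ (c : ℝ) x y, f (c • x + y) = c * f x + f y)
    {ι : Type*} (s : Finset ι) (g : ι → V) :
    f (∑ i ∈ s, g i) = ∑ i ∈ s, f (g i) := by
  classical
  induction s using Finset.induction_on with
  | empty => simp [lin_zero f hf]
  | @insert j s hj ih =>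
    rw [Finset.sum_insert hj, Finset.sum_insert hj, ← ih]
    simpa using hf 1 (g j) (∑ i ∈ s, g i)

/-- expansion of a linear functional over an orthonormal basis -/
lemma lin_expand {n : ℕ} (e : Module.Basis (Fin n) ℝ V) (he : Orthonormal ℝ e)
    (f : V → ℝ) (hf : ∀ (c : ℝ) x y, f (c • x + y) = c * f x + f y) (Y : V) :
    ∑ i, ⟪e i, Y⟫ * f (e i) = f Y := by
  have hrepr : ∀ i, ⟪e i, Y⟫ = e.repr Y i := by
    intro i
    conv_lhs => rw [← e.sum_repr Y]
    exact he.inner_right_fintype _ i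
  have hY : Y = ∑ i, ⟪e i, Y⟫ • e i := by
    conv_lhs => rw [← e.sum_repr Y]
    exact Finset.sum_congr rfl fun i _ => by rw [hrepr i]
  calc ∑ i, ⟪e i, Y⟫ * f (e i) = ∑ i, f (⟪e i, Y⟫ • e i) := by
        simp [lin_smul f hf]
    _ = f (∑ i, ⟪e i, Y⟫ • e i) := (lin_sum f hf _ _).symm
    _ = f Y := by rw [← hY]

lemma solve_alg (a b r nn s ip : ℝ) (ha : a ≠ 0) (hnn : nn ≠ 0) (hn1 : nn - 1 ≠ 0)
    (hab : a + (nn-2)*b ≠ 0)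
    (hE : a*s + b*(nn*s - s + ip*r - s) - (r/nn)*(a/(nn-1)+2*b)*(nn*ip - ip) = 0) :
    s = (r/(1+(b/a)*(nn-2))) * (-(b/a) + (1/nn)*(1+2*b*(nn-1)/a)) * ip := by
  have key : (a + (nn-2)*b) * s * (nn*(nn-1)) =
      r * (a + 2*b*(nn-1) - b*nn) * (nn-1) * ip := by
    field_simp at hE
    linear_combination (nn - 1) * hE
  have h0 : nn * (nn-1) * (a + (nn-2)*b) ≠ 0 :=
    mul_ne_zero (mul_ne_zero hnn hn1) hab
  have hs : s = r * (a + 2*b*(nn-1) - b*nn) * (nn-1) * ip / (nn*(nn-1)*(a+(nn-2)*b)) := by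
    rw [eq_div_iff h0]
    linear_combination key
  have hrw : 1 + (b/a)*(nn-2) = (a+(nn-2)*b)/a := by field_simp
  rw [hs, hrw]
  field_simp
  ring

end Aux

theorem stmt0
    {V : Type*} [NormedAddCommGroup V] [InnerProductSpace ℝ V]
    (n : ℕ) (hn : 3 < n)
    (e : Module.Basis (Fin n) ℝ V) (he : Orthonormal ℝ e)
    (Rb : V → V → V → V → ℝ)
    (hlin1 : ∀ (c : ℝ) (X X' Y Z W : V),
      Rb (c • X + X') Y Z W = c * Rb X Y Z W + Rb X' Y Z W)
    (hlin2 : ∀ (c : ℝ) (X Y Y' Z W : V),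
      Rb X (c • Y + Y') Z W = c * Rb X Y Z W + Rb X Y' Z W)
    (hlin3 : ∀ (c : ℝ) (X Y Z Z' W : V),
      Rb X Y (c • Z + Z') W = c * Rb X Y Z W + Rb X Y Z' W)
    (hlin4 : ∀ (c : ℝ) (X Y Z W W' : V),
      Rb X Y Z (c • W + W') = c * Rb X Y Z W + Rb X Y Z W')
    (hskew1 : ∀ X Y Z W : V, Rb X Y Z W = - Rb Y X Z W)
    (hskew2 : ∀ X Y Z W : V, Rb X Y Z W = - Rb X Y W Z)
    (hpair : ∀ X Y Z W : V, Rb X Y Z W = Rb Z W X Y)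
    (S : V → V → ℝ) (hS : ∀ Y Z : V, S Y Z = ∑ i, Rb (e i) Y Z (e i))
    (r : ℝ) (hr : r = ∑ i, S (e i) (e i))
    (a b : ℝ)
    (Cs : V → V → V → V → ℝ)
    (hC : ∀ X Y Z W : V, Cs X Y Z W =
      a * Rb X Y Z W
      + b * (S Y Z * ⟪X, W⟫ - S X Z * ⟪Y, W⟫
             + ⟪Y, Z⟫ * S X W - ⟪X, Z⟫ * S Y W)
      - (r / n) * (a / ((n : ℝ) - 1) + 2 * b)
        * (⟪Y, Z⟫ * ⟪X, W⟫ - ⟪X, Z⟫ * ⟪Y, W⟫))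
    (ha : a ≠ 0) (hab : a + ((n : ℝ) - 2) * b ≠ 0)
    (hflat : ∀ X Y Z W : V, Cs X Y Z W = 0) :
    ∀ Y Z : V, S Y Z =
      (r / (1 + (b / a) * ((n : ℝ) - 2)))
        * (-(b / a) + (1 / (n : ℝ)) * (1 + 2 * b * ((n : ℝ) - 1) / a))
        * ⟪Y, Z⟫ := by
  intro Y Z
  have hnR : (0 : ℝ) < n := by positivity
  have hee : ∀ i : Fin n, ⟪e i, e i⟫ = (1 : ℝ) := fun i => by
    simpa using (orthonormal_iff_ite.mp he) i i
  -- S is linear in each slot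
  have hSlin1 : ∀ Z : V, ∀ (c : ℝ) (x y : V),
      (fun Y => S Y Z) (c • x + y) = c * S x Z + S y Z := by
    intro Z c x y
    simp only [hS, hlin2, Finset.sum_add_distrib, Finset.mul_sum]
  have hSlin2 : ∀ Y : V, ∀ (c : ℝ) (x y : V),
      S Y (c • x + y) = c * S Y x + S Y y := by
    intro Y c x y
    simp only [hS, hlin3, Finset.sum_add_distrib, Finset.mul_sum]
  -- contraction identities
  have hA : ∑ i, S (e i) Z * ⟪Y, e i⟫ = S Y Z := by
    rw [← lin_expand e he (fun Y => S Y Z) (hSlin1 Z) Y]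
    exact Finset.sum_congr rfl fun i _ => by rw [real_inner_comm, mul_comm]
  have hB : ∑ i, ⟪e i, Z⟫ * S Y (e i) = S Y Z :=
    lin_expand e he (fun Z => S Y Z) (hSlin2 Y) Z
  have hinner : ∀ W : V, ∀ (c : ℝ) (x y : V),
      ⟪c • x + y, W⟫ = c * ⟪x, W⟫ + ⟪y, W⟫ := by
    intro W c x y
    rw [inner_add_left, real_inner_smul_left]
  have hI : ∑ i, ⟪e i, Z⟫ * ⟪Y, e i⟫ = ⟪Y, Z⟫ := by
    rw [← lin_expand e he (fun x => ⟪x, Z⟫) (hinner Z) Y]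
    exact Finset.sum_congr rfl fun i _ => by rw [real_inner_comm Y (e i), mul_comm]
  -- sum the flatness condition over i
  set K : ℝ := (r / n) * (a / ((n : ℝ) - 1) + 2 * b) with hK
  have hsum0 : ∑ i, Cs (e i) Y Z (e i) = 0 := by simp [hflat]
  have hterm : ∀ i : Fin n, Cs (e i) Y Z (e i) =
      a * Rb (e i) Y Z (e i)
      + b * (S Y Z * ⟪e i, e i⟫) - b * (S (e i) Z * ⟪Y, e i⟫)
      + b * (⟪Y, Z⟫ * S (e i) (e i)) - b * (⟪e i, Z⟫ * S Y (e i))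
      - K * (⟪Y, Z⟫ * ⟪e i, e i⟫) + K * (⟪e i, Z⟫ * ⟪Y, e i⟫) := by
    intro i
    rw [hC]
    ring
  rw [Finset.sum_congr rfl fun i _ => hterm i] at hsum0
  simp only [Finset.sum_add_distrib, Finset.sum_sub_distrib, ← Finset.mul_sum] at hsum0
  rw [← hS, hA, hB, hI] at hsum0
  have hsumee : ∑ i : Fin n, ⟪e i, e i⟫ = (n : ℝ) := by rw [Finset.sum_congr rfl fun i _ => hee i]; simp
  rw [hsumee, ← hr] at hsum0
  -- now just algebra
  have hn1 : (n : ℝ) - 1 ≠ 0 := by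
    have : (3 : ℝ) < n := by exact_mod_cast hn
    linarith
  have hnne : (n : ℝ) ≠ 0 := ne_of_gt hnR
  apply solve_alg a b r (n : ℝ) (S Y Z) ⟪Y, Z⟫ ha hnne hn1 hab
  rw [← hK]
  linarith [hsum0]
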